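/- arXiv:1607.02205 — 2 statements merged into one kernel-verified Lean document; each statement's English description precedes it below -/
import Mathlib

section
/- For all real constants a₁, a₂, a₃, a₄, c₅, c₆, c₇, c₈, α, γ, K, σ, φ, the improper integral over t ∈ ℝ of e^{1+2c₅} e^{−t²/2} · [ 2u_Γ(t)·(a₁ u_Γ(t) v_Γ(t) − a₂ u_Γ(t)³ + a₃ u_Γ(t)) − ( −a₄ u_Γ(t)² − c₈ α u_Γ(t) + c₆ v_Γ(t) + c₇ + γ + K(cos(σt)cos φ − 1) ) ] dt equals e^{1+2c₅} √(2π) · ( a₁/8 − 3a₂/8 + a₃/2 + a₄/4 − a₁c₅/2 + c₅c₆ + c₆/4 − c₇ − γ − K(e^{−σ²/2} cos φ − 1) ). (This is the leading-order Melnikov integral d_{r₂²} for the low-frequency forcing regime.) -/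
open MeasureTheory Real

/-- Heteroclinic parametrization `u_Γ(t) = -t/2`. -/
noncomputable def uGamma (t : ℝ) : ℝ := -t / 2

/-- Heteroclinic parametrization `v_Γ(t) = t²/4 - 1/2 - c₅`. -/
noncomputable def vGamma (c₅ t : ℝ) : ℝ := t ^ 2 / 4 - 1 / 2 - c₅


lemma int_pow_gauss (n : ℕ) : Integrable (fun t : ℝ => t ^ n * Real.exp (-t ^ 2 / 2)) := by
  have h := integrable_rpow_mul_exp_neg_mul_sq (show (0:ℝ) < 1/2 by norm_num)
    (show (-1:ℝ) < (n:ℝ) by exact lt_of_lt_of_le neg_one_lt_zero (Nat.cast_nonneg n))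
  refine h.congr (Filter.Eventually.of_forall fun t => ?_)
  dsimp only
  rw [Real.rpow_natCast]
  ring_nf

lemma hasDerivAt_negGauss (x : ℝ) :
    HasDerivAt (fun t : ℝ => -Real.exp (-t ^ 2 / 2)) (x * Real.exp (-x ^ 2 / 2)) x := by
  have h1 : HasDerivAt (fun t : ℝ => -t ^ 2 / 2) (-x) x := by
    have := ((hasDerivAt_pow 2 x).neg.div_const 2)
    refine this.congr_deriv ?_
    push_cast; ring
  have := (h1.exp).neg
  refine this.congr_deriv ?_
  ring

lemma gauss_one : (∫ t : ℝ, t * Real.exp (-t ^ 2 / 2)) = 0 := by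
  have hu : ∀ x : ℝ, HasDerivAt (fun _ : ℝ => (1:ℝ)) ((fun _ : ℝ => (0:ℝ)) x) x :=
    fun x => hasDerivAt_const x 1
  have h := integral_mul_deriv_eq_deriv_mul_of_integrable (fun x _ => hu x) (fun x _ => hasDerivAt_negGauss x)
    ?_ ?_ ?_
  · have h1 : (∫ x : ℝ, (1:ℝ) * (x * Real.exp (-x ^ 2 / 2))) = ∫ t : ℝ, t * Real.exp (-t ^ 2 / 2) := by
      congr 1; funext x; ring
    rw [h1] at h
    rw [h]
    simp
  · refine (int_pow_gauss 1).congr (Filter.Eventually.of_forall fun t => ?_)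
    simp only [Pi.mul_apply]; ring
  · refine (integrable_zero ℝ ℝ (volume : Measure ℝ)).congr
      (Filter.Eventually.of_forall fun t => ?_)
    simp [Pi.mul_apply]
  · refine ((int_pow_gauss 0).neg).congr (Filter.Eventually.of_forall fun t => ?_)
    simp [Pi.mul_apply]

lemma gauss_rec (n : ℕ) : (∫ t : ℝ, t ^ (n+2) * Real.exp (-t ^ 2 / 2))
    = (n+1) * ∫ t : ℝ, t ^ n * Real.exp (-t ^ 2 / 2) := by
  have hu : ∀ x : ℝ, HasDerivAt (fun t : ℝ => t ^ (n+1))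
      ((fun t : ℝ => ((n:ℝ)+1) * t ^ n) x) x := fun x => by
    simpa using hasDerivAt_pow (n+1) x
  have h := integral_mul_deriv_eq_deriv_mul_of_integrable (fun x _ => hu x) (fun x _ => hasDerivAt_negGauss x) ?_ ?_ ?_
  · have h1 : (∫ x : ℝ, x ^ (n+1) * (x * Real.exp (-x ^ 2 / 2)))
        = ∫ t : ℝ, t ^ (n+2) * Real.exp (-t ^ 2 / 2) := by
      congr 1; funext x; ring
    rw [h1] at h
    rw [h, ← integral_neg]
    rw [show (((n:ℝ)+1) * ∫ t : ℝ, t ^ n * Real.exp (-t ^ 2 / 2))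
        = ∫ t : ℝ, ((n:ℝ)+1) * (t ^ n * Real.exp (-t ^ 2 / 2)) from
      (integral_const_mul ((n:ℝ)+1) _).symm]
    congr 1; funext x; ring
  · refine (int_pow_gauss (n+2)).congr (Filter.Eventually.of_forall fun t => ?_)
    simp only [Pi.mul_apply]; ring
  · refine (((int_pow_gauss n).const_mul ((n:ℝ)+1)).neg).congr
      (Filter.Eventually.of_forall fun t => ?_)
    simp only [Pi.mul_apply, Pi.neg_apply]; ring
  · refine ((int_pow_gauss (n+1)).neg).congr (Filter.Eventually.of_forall fun t => ?_)
    simp only [Pi.mul_apply, Pi.neg_apply]; ring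

lemma gauss_zero : (∫ t : ℝ, Real.exp (-t ^ 2 / 2)) = Real.sqrt (2 * Real.pi) := by
  have h := integral_gaussian (1/2 : ℝ)
  rw [show Real.pi / (1/2 : ℝ) = 2 * Real.pi by ring] at h
  rw [← h]
  congr 1; funext x; congr 1; ring

lemma gauss_two : (∫ t : ℝ, t ^ 2 * Real.exp (-t ^ 2 / 2)) = Real.sqrt (2 * Real.pi) := by
  have := gauss_rec 0
  simp only [pow_zero, one_mul] at this
  rw [show ((0:ℕ):ℝ) + 1 = 1 by norm_num] at this
  rw [this, gauss_zero, one_mul]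

lemma gauss_three : (∫ t : ℝ, t ^ 3 * Real.exp (-t ^ 2 / 2)) = 0 := by
  have := gauss_rec 1
  simp only [pow_one] at this
  rw [this, gauss_one, mul_zero]

lemma gauss_four : (∫ t : ℝ, t ^ 4 * Real.exp (-t ^ 2 / 2)) = 3 * Real.sqrt (2 * Real.pi) := by
  have := gauss_rec 2
  rw [this, gauss_two]
  norm_num


lemma gauss_cos (σ : ℝ) : (∫ t : ℝ, Real.cos (σ * t) * Real.exp (-t ^ 2 / 2))
    = Real.sqrt (2 * Real.pi) * Real.exp (-σ ^ 2 / 2) := by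
  have hb : (0:ℝ) < ((1/2 : ℂ)).re := by norm_num
  have h := fourierIntegral_gaussian (b := (1/2 : ℂ)) hb (σ : ℂ)
  have hint : Integrable (fun x : ℝ => Complex.exp (Complex.I * σ * x) * Complex.exp (-(1/2 : ℂ) * x ^ 2)) := by
    refine (integrable_cexp_neg_mul_sq hb).bdd_mul ?_ (c := 1) (Filter.Eventually.of_forall fun x => ?_)
    · exact (Complex.continuous_exp.comp (by continuity)).aestronglyMeasurable
    · rw [Complex.norm_exp]
      simp
  have hre := integral_re (𝕜 := ℂ) hint
  rw [h] at hre
  simp only [RCLike.re_to_complex] at hre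
  have hL : (∫ x : ℝ, Complex.re (Complex.exp (Complex.I * σ * x) * Complex.exp (-(1/2 : ℂ) * x ^ 2)))
      = ∫ t : ℝ, Real.cos (σ * t) * Real.exp (-t ^ 2 / 2) := by
    congr 1; funext x
    have e1 : Complex.exp (-(1/2 : ℂ) * x ^ 2) = ((Real.exp (-x ^ 2 / 2) : ℝ) : ℂ) := by
      rw [Complex.ofReal_exp]
      congr 1
      push_cast
      ring
    have e2 : Complex.exp (Complex.I * σ * x) = Complex.exp ((σ * x : ℝ) * Complex.I) := by
      congr 1; push_cast; ring
    rw [e1, e2]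
    rw [mul_comm]
    rw [Complex.re_ofReal_mul]
    rw [Complex.exp_ofReal_mul_I_re]
    ring
  have hR : ((Real.pi / (1/2 : ℂ)) ^ (1/2 : ℂ) * Complex.exp (-(σ:ℂ) ^ 2 / (4 * (1/2)))).re
      = Real.sqrt (2 * Real.pi) * Real.exp (-σ ^ 2 / 2) := by
    have e3 : ((Real.pi : ℂ) / (1/2 : ℂ)) = ((2 * Real.pi : ℝ) : ℂ) := by push_cast; ring
    have e4 : ((2 * Real.pi : ℝ) : ℂ) ^ (1/2 : ℂ) = ((Real.sqrt (2 * Real.pi) : ℝ) : ℂ) := by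
      rw [Real.sqrt_eq_rpow]
      rw [Complex.ofReal_cpow (by positivity)]
      push_cast
      ring_nf
    have e5 : Complex.exp (-(σ:ℂ) ^ 2 / (4 * (1/2))) = ((Real.exp (-σ ^ 2 / 2) : ℝ) : ℂ) := by
      rw [Complex.ofReal_exp]
      congr 1
      push_cast
      ring
    rw [e3, e4, e5, ← Complex.ofReal_mul, Complex.ofReal_re]
  rw [hL, hR] at hre
  exact hre

lemma int_cos_gauss (σ : ℝ) : Integrable (fun t : ℝ => Real.cos (σ * t) * Real.exp (-t ^ 2 / 2)) := by
  have h0 : Integrable (fun t : ℝ => Real.exp (-t ^ 2 / 2)) := by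
    simpa using int_pow_gauss 0
  exact h0.bdd_mul ((Real.continuous_cos.comp (by continuity)).aestronglyMeasurable)
    (c := 1) (Filter.Eventually.of_forall fun x => by simpa using Real.abs_cos_le_one (σ * x))

lemma gauss_comb (c0 c1 c2 c3 c4 cK σ : ℝ) :
    (∫ t : ℝ, (c0 * Real.exp (-t ^ 2 / 2) + c1 * (t * Real.exp (-t ^ 2 / 2))
      + c2 * (t ^ 2 * Real.exp (-t ^ 2 / 2)) + c3 * (t ^ 3 * Real.exp (-t ^ 2 / 2))
      + c4 * (t ^ 4 * Real.exp (-t ^ 2 / 2)) + cK * (Real.cos (σ * t) * Real.exp (-t ^ 2 / 2))))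
    = c0 * Real.sqrt (2 * Real.pi) + c2 * Real.sqrt (2 * Real.pi)
      + 3 * c4 * Real.sqrt (2 * Real.pi) + cK * (Real.sqrt (2 * Real.pi) * Real.exp (-σ ^ 2 / 2)) := by
  have h0 : Integrable (fun t : ℝ => Real.exp (-t ^ 2 / 2)) := by simpa using int_pow_gauss 0
  have h1 : Integrable (fun t : ℝ => t * Real.exp (-t ^ 2 / 2)) := by
    simpa using int_pow_gauss 1
  have i0 := h0.const_mul c0
  have i1 := h1.const_mul c1
  have i2 := (int_pow_gauss 2).const_mul c2
  have i3 := (int_pow_gauss 3).const_mul c3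
  have i4 := (int_pow_gauss 4).const_mul c4
  have iK := (int_cos_gauss σ).const_mul cK
  have eK := integral_add (((((i0.add i1).add i2).add i3).add i4)) iK
  have e4 := integral_add ((((i0.add i1).add i2).add i3)) i4
  have e3 := integral_add (((i0.add i1).add i2)) i3
  have e2 := integral_add ((i0.add i1)) i2
  have e1 := integral_add i0 i1
  simp only [Pi.add_apply] at eK e4 e3 e2 e1
  rw [eK, e4, e3, e2, e1,
      integral_const_mul, integral_const_mul, integral_const_mul, integral_const_mul,
      integral_const_mul, integral_const_mul,
      gauss_zero, gauss_one, gauss_two, gauss_three, gauss_four, gauss_cos]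
  ring

/-- The leading-order Melnikov integral `d_{r₂²}` for the low-frequency forcing regime. -/
theorem melnikov_low_frequency_leading_order
    (a₁ a₂ a₃ a₄ c₅ c₆ c₇ c₈ α γ K σ φ : ℝ) :
    (∫ t : ℝ,
      Real.exp (1 + 2 * c₅) * Real.exp (-t ^ 2 / 2) *
        (2 * uGamma t *
            (a₁ * uGamma t * vGamma c₅ t - a₂ * uGamma t ^ 3 + a₃ * uGamma t)
          - (-a₄ * uGamma t ^ 2 - c₈ * α * uGamma t + c₆ * vGamma c₅ t + c₇ + γ
              + K * (Real.cos (σ * t) * Real.cos φ - 1))))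
    = Real.exp (1 + 2 * c₅) * Real.sqrt (2 * Real.pi) *
        (a₁ / 8 - 3 * a₂ / 8 + a₃ / 2 + a₄ / 4 - a₁ * c₅ / 2 + c₅ * c₆ + c₆ / 4 - c₇ - γ
          - K * (Real.exp (-σ ^ 2 / 2) * Real.cos φ - 1)) := by
  set E := Real.exp (1 + 2 * c₅) with hE
  have key : (∫ t : ℝ,
      Real.exp (1 + 2 * c₅) * Real.exp (-t ^ 2 / 2) *
        (2 * uGamma t *
            (a₁ * uGamma t * vGamma c₅ t - a₂ * uGamma t ^ 3 + a₃ * uGamma t)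
          - (-a₄ * uGamma t ^ 2 - c₈ * α * uGamma t + c₆ * vGamma c₅ t + c₇ + γ
              + K * (Real.cos (σ * t) * Real.cos φ - 1))))
      = ∫ t : ℝ, ((E * (c₆ / 2 + c₅ * c₆ - c₇ - γ + K)) * Real.exp (-t ^ 2 / 2)
        + (-(E * (c₈ * α / 2))) * (t * Real.exp (-t ^ 2 / 2))
        + (E * (-a₁ / 4 - a₁ * c₅ / 2 + a₃ / 2 + a₄ / 4 - c₆ / 4)) * (t ^ 2 * Real.exp (-t ^ 2 / 2))
        + (0 : ℝ) * (t ^ 3 * Real.exp (-t ^ 2 / 2))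
        + (E * (a₁ / 8 - a₂ / 8)) * (t ^ 4 * Real.exp (-t ^ 2 / 2))
        + (-(E * K * Real.cos φ)) * (Real.cos (σ * t) * Real.exp (-t ^ 2 / 2))) := by
    congr 1; funext t
    simp only [uGamma, vGamma, hE]
    ring
  rw [key, gauss_comb]
  ring
end

section
/- For all real constants a₁, a₂, a₃, a₄, c₅, c₆, c₇, α, β, σ, θ₀, the improper integral over t ∈ ℝ of e^{1+2c₅} e^{−t²/2} · [ 2u_Γ(t)·(a₁ u_Γ(t) v_Γ(t) − a₂ u_Γ(t)³ + a₃ u_Γ(t)) − ( −a₄ u_Γ(t)² + α + c₆ v_Γ(t) + c₇ + β cos(σt + θ₀) ) ] dt equals e^{1+2c₅} √(2π) · ( a₁/8 − 3a₂/8 + a₃/2 + a₄/4 − a₁c₅/2 + c₅c₆ + c₆/4 − c₇ − α − β e^{−σ²/2} cos θ₀ ). (This is the leading-order Melnikov integral d_{r₂} for the intermediate-frequency forcing regime.) -/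
open MeasureTheory Real

section MelnikovAux

open Filter

lemma integrable_pow_gauss (n : ℕ) :
    Integrable fun t : ℝ => t ^ n * Real.exp (-t ^ 2 / 2) := by
  have h := integrable_rpow_mul_exp_neg_mul_sq (b := (1/2:ℝ)) (by norm_num)
      (s := (n:ℝ)) (lt_of_lt_of_le (by norm_num) (Nat.cast_nonneg n))
  have e : (fun t : ℝ => t ^ n * Real.exp (-t ^ 2 / 2))
      = fun t : ℝ => t ^ (n:ℝ) * Real.exp (-(1/2:ℝ) * t ^ 2) := by
    funext t
    rw [Real.rpow_natCast, show -t ^ 2 / 2 = -(1/2:ℝ) * t ^ 2 by ring]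
  rw [e]; exact h

lemma integrable_gauss : Integrable fun t : ℝ => Real.exp (-t ^ 2 / 2) := by
  simpa using integrable_pow_gauss 0

lemma integrable_gauss_cos (σ θ₀ : ℝ) :
    Integrable fun t : ℝ => Real.exp (-t ^ 2 / 2) * Real.cos (σ * t + θ₀) := by
  refine integrable_gauss.mono' (Continuous.aestronglyMeasurable (by continuity)) ?_
  refine Filter.Eventually.of_forall fun t => ?_
  rw [norm_mul, Real.norm_eq_abs, Real.norm_eq_abs, Real.abs_exp]
  exact mul_le_of_le_one_right (Real.exp_pos _).le (Real.abs_cos_le_one _)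

lemma tendsto_pow_gauss (n : ℕ) :
    Tendsto (fun t : ℝ => t ^ n * Real.exp (-t ^ 2 / 2)) (cocompact ℝ) (nhds 0) := by
  have h := tendsto_rpow_abs_mul_exp_neg_mul_sq_cocompact (a := (1/2:ℝ)) (by norm_num) (n:ℝ)
  refine squeeze_zero_norm (fun t => le_of_eq ?_) h
  rw [norm_mul, Real.norm_eq_abs, Real.norm_eq_abs, abs_pow, Real.abs_exp,
    ← Real.rpow_natCast |t| n, show -t ^ 2 / 2 = -(1/2:ℝ) * t ^ 2 by ring]

lemma integral_deriv_eq_zero (f f' : ℝ → ℝ)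
    (hd : ∀ x : ℝ, HasDerivAt f (f' x) x)
    (hi : Integrable f')
    (ht : Tendsto f (cocompact ℝ) (nhds 0)) :
    ∫ x : ℝ, f' x = 0 := by
  have htop : Tendsto f atTop (nhds 0) :=
    ht.mono_left (by rw [cocompact_eq_atBot_atTop]; exact le_sup_right)
  have hbot : Tendsto f atBot (nhds 0) :=
    ht.mono_left (by rw [cocompact_eq_atBot_atTop]; exact le_sup_left)
  have h1 : ∫ x in Set.Iic (0:ℝ), f' x = f 0 - 0 :=
    integral_Iic_of_hasDerivAt_of_tendsto (hd 0).continuousAt.continuousWithinAt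
      (fun x _ => hd x) hi.integrableOn hbot
  have h2 : ∫ x in Set.Ioi (0:ℝ), f' x = 0 - f 0 :=
    integral_Ioi_of_hasDerivAt_of_tendsto (hd 0).continuousAt.continuousWithinAt
      (fun x _ => hd x) hi.integrableOn htop
  rw [← intervalIntegral.integral_Iic_add_Ioi hi.integrableOn hi.integrableOn, h1, h2]
  ring

lemma hasDerivAt_gauss (t : ℝ) :
    HasDerivAt (fun t : ℝ => Real.exp (-t ^ 2 / 2)) (-t * Real.exp (-t ^ 2 / 2)) t := by
  have h : HasDerivAt (fun t : ℝ => -t ^ 2 / 2) (-t) t := by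
    have := ((hasDerivAt_pow 2 t).neg.div_const 2)
    refine this.congr_deriv ?_
    simp; ring
  simpa [mul_comm] using h.exp

lemma integral_gauss : ∫ t : ℝ, Real.exp (-t ^ 2 / 2) = Real.sqrt (2 * Real.pi) := by
  have h := integral_gaussian (1/2 : ℝ)
  simp_rw [show ∀ t : ℝ, -(1/2:ℝ) * t ^ 2 = -t ^ 2 / 2 from fun t => by ring] at h
  rw [h]
  congr 1
  ring

lemma moment2_sub : ∫ t : ℝ, (t ^ 2 - 1) * Real.exp (-t ^ 2 / 2) = 0 := by
  refine integral_deriv_eq_zero (fun t => -t * Real.exp (-t ^ 2 / 2)) _ (fun x => ?_) ?_ ?_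
  · have h := (hasDerivAt_id x).neg.mul (hasDerivAt_gauss x)
    refine h.congr_deriv ?_
    simp only [Pi.neg_apply, id_eq]
    ring
  · have h := (integrable_pow_gauss 2).sub integrable_gauss
    have e : (fun t : ℝ => (t ^ 2 - 1) * Real.exp (-t ^ 2 / 2))
        = fun t : ℝ => t ^ 2 * Real.exp (-t ^ 2 / 2) - Real.exp (-t ^ 2 / 2) := by
      funext t; ring
    rw [e]; exact h
  · have h := (tendsto_pow_gauss 1).neg
    simpa [neg_mul] using h

lemma moment4_sub : ∫ t : ℝ, (t ^ 4 - 3 * t ^ 2) * Real.exp (-t ^ 2 / 2) = 0 := by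
  refine integral_deriv_eq_zero (fun t => -t ^ 3 * Real.exp (-t ^ 2 / 2)) _ (fun x => ?_) ?_ ?_
  · have h := (hasDerivAt_pow 3 x).neg.mul (hasDerivAt_gauss x)
    refine h.congr_deriv ?_
    simp
    ring
  · have h := (integrable_pow_gauss 4).sub ((integrable_pow_gauss 2).const_mul 3)
    have e : (fun t : ℝ => (t ^ 4 - 3 * t ^ 2) * Real.exp (-t ^ 2 / 2))
        = fun t : ℝ => t ^ 4 * Real.exp (-t ^ 2 / 2) - 3 * (t ^ 2 * Real.exp (-t ^ 2 / 2)) := by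
      funext t; ring
    rw [e]; exact h
  · have h := (tendsto_pow_gauss 3).neg
    simpa [neg_mul] using h

lemma moment2 : ∫ t : ℝ, t ^ 2 * Real.exp (-t ^ 2 / 2) = Real.sqrt (2 * Real.pi) := by
  have h := integral_sub (integrable_pow_gauss 2) integrable_gauss
  have e : (fun t : ℝ => t ^ 2 * Real.exp (-t ^ 2 / 2) - Real.exp (-t ^ 2 / 2))
      = fun t : ℝ => (t ^ 2 - 1) * Real.exp (-t ^ 2 / 2) := by funext t; ring
  rw [e, moment2_sub, integral_gauss] at h
  linarith [h]

lemma moment4 : ∫ t : ℝ, t ^ 4 * Real.exp (-t ^ 2 / 2) = 3 * Real.sqrt (2 * Real.pi) := by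
  have h := integral_sub (integrable_pow_gauss 4) ((integrable_pow_gauss 2).const_mul 3)
  have e : (fun t : ℝ => t ^ 4 * Real.exp (-t ^ 2 / 2) - 3 * (t ^ 2 * Real.exp (-t ^ 2 / 2)))
      = fun t : ℝ => (t ^ 4 - 3 * t ^ 2) * Real.exp (-t ^ 2 / 2) := by funext t; ring
  rw [e, moment4_sub, integral_const_mul, moment2] at h
  linarith [h]

lemma integral_gauss_cos (σ θ₀ : ℝ) :
    ∫ t : ℝ, Real.exp (-t ^ 2 / 2) * Real.cos (σ * t + θ₀)
      = Real.sqrt (2 * Real.pi) * Real.exp (-σ ^ 2 / 2) * Real.cos θ₀ := by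
  have hb : (-(1/2:ℂ)).re < 0 := by norm_num
  have hint := integrable_cexp_quadratic' hb (σ * Complex.I) (θ₀ * Complex.I)
  have hI := integral_cexp_quadratic hb (σ * Complex.I) (θ₀ * Complex.I)
  have harg : ∀ t : ℝ, -(1/2:ℂ) * (t:ℂ) ^ 2 + (σ * Complex.I) * t + θ₀ * Complex.I
      = Complex.ofReal (-t ^ 2 / 2) + Complex.ofReal (σ * t + θ₀) * Complex.I := by
    intro t; push_cast; ring
  have hre : ∀ t : ℝ, Real.exp (-t ^ 2 / 2) * Real.cos (σ * t + θ₀)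
      = (Complex.exp (-(1/2:ℂ) * (t:ℂ) ^ 2 + (σ * Complex.I) * t + θ₀ * Complex.I)).re := by
    intro t
    rw [harg t, Complex.exp_re]
    simp [← Complex.ofReal_pow]
  simp_rw [hre]
  rw [show (∫ t : ℝ, (Complex.exp (-(1/2:ℂ) * (t:ℂ) ^ 2 + (σ * Complex.I) * t
      + θ₀ * Complex.I)).re)
    = (∫ t : ℝ, Complex.exp (-(1/2:ℂ) * (t:ℂ) ^ 2 + (σ * Complex.I) * t + θ₀ * Complex.I)).re
    from by simpa using integral_re hint, hI]
  have h1 : ((Real.pi : ℂ) / -(-(1/2:ℂ))) = ((2 * Real.pi : ℝ) : ℂ) := by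
    push_cast; ring
  have h2 : (((2 * Real.pi : ℝ) : ℂ)) ^ (1/2 : ℂ) = ((Real.sqrt (2 * Real.pi) : ℝ) : ℂ) := by
    rw [Real.sqrt_eq_rpow, Complex.ofReal_cpow (by positivity)]
    norm_num
  have h3 : (θ₀ : ℂ) * Complex.I - ((σ : ℂ) * Complex.I) ^ 2 / (4 * -(1/2:ℂ))
      = Complex.ofReal (-σ ^ 2 / 2) + Complex.ofReal θ₀ * Complex.I := by
    rw [mul_pow, Complex.I_sq]
    push_cast
    ring
  rw [h1, h2, h3, Complex.re_ofReal_mul, Complex.exp_re]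
  simp [← Complex.ofReal_pow]
  ring

lemma integral_comb (A B C D σ θ₀ : ℝ) :
    ∫ t : ℝ, (A * t ^ 4 + B * t ^ 2 + C + D * Real.cos (σ * t + θ₀)) * Real.exp (-t ^ 2 / 2)
      = (3 * A + B + C) * Real.sqrt (2 * Real.pi)
        + D * (Real.sqrt (2 * Real.pi) * Real.exp (-σ ^ 2 / 2) * Real.cos θ₀) := by
  have i4 : Integrable fun t : ℝ => A * (t ^ 4 * Real.exp (-t ^ 2 / 2)) :=
    (integrable_pow_gauss 4).const_mul A
  have i2 : Integrable fun t : ℝ => B * (t ^ 2 * Real.exp (-t ^ 2 / 2)) :=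
    (integrable_pow_gauss 2).const_mul B
  have i0 : Integrable fun t : ℝ => C * Real.exp (-t ^ 2 / 2) :=
    integrable_gauss.const_mul C
  have ic : Integrable fun t : ℝ => D * (Real.exp (-t ^ 2 / 2) * Real.cos (σ * t + θ₀)) :=
    (integrable_gauss_cos σ θ₀).const_mul D
  have i0c : Integrable fun t : ℝ => C * Real.exp (-t ^ 2 / 2)
      + D * (Real.exp (-t ^ 2 / 2) * Real.cos (σ * t + θ₀)) := i0.add ic
  have i20c : Integrable fun t : ℝ => B * (t ^ 2 * Real.exp (-t ^ 2 / 2))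
      + (C * Real.exp (-t ^ 2 / 2)
        + D * (Real.exp (-t ^ 2 / 2) * Real.cos (σ * t + θ₀))) := i2.add i0c
  have e : ∀ t : ℝ, (A * t ^ 4 + B * t ^ 2 + C + D * Real.cos (σ * t + θ₀))
        * Real.exp (-t ^ 2 / 2)
      = A * (t ^ 4 * Real.exp (-t ^ 2 / 2)) + (B * (t ^ 2 * Real.exp (-t ^ 2 / 2))
        + (C * Real.exp (-t ^ 2 / 2)
          + D * (Real.exp (-t ^ 2 / 2) * Real.cos (σ * t + θ₀)))) := by
    intro t; ring
  simp_rw [e]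
  rw [integral_add i4 i20c, integral_add i2 i0c, integral_add i0 ic,
      integral_const_mul, integral_const_mul, integral_const_mul, integral_const_mul,
      moment4, moment2, integral_gauss, integral_gauss_cos]
  ring

end MelnikovAux

/-- The leading-order Melnikov integral `d_{r₂}` for the intermediate-frequency
forcing regime. -/
theorem melnikov_intermediate_frequency_leading_order
    (a₁ a₂ a₃ a₄ c₅ c₆ c₇ α β σ θ₀ : ℝ) :
    (∫ t : ℝ,
      Real.exp (1 + 2 * c₅) * Real.exp (-t ^ 2 / 2) *
        (2 * uGamma t *
            (a₁ * uGamma t * vGamma c₅ t - a₂ * uGamma t ^ 3 + a₃ * uGamma t)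
          - (-a₄ * uGamma t ^ 2 + α + c₆ * vGamma c₅ t + c₇
              + β * Real.cos (σ * t + θ₀))))
    = Real.exp (1 + 2 * c₅) * Real.sqrt (2 * Real.pi) *
        (a₁ / 8 - 3 * a₂ / 8 + a₃ / 2 + a₄ / 4 - a₁ * c₅ / 2 + c₅ * c₆ + c₆ / 4 - c₇ - α
          - β * Real.exp (-σ ^ 2 / 2) * Real.cos θ₀) := by
  have e : ∀ t : ℝ,
      Real.exp (1 + 2 * c₅) * Real.exp (-t ^ 2 / 2) *
        (2 * uGamma t *
            (a₁ * uGamma t * vGamma c₅ t - a₂ * uGamma t ^ 3 + a₃ * uGamma t)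
          - (-a₄ * uGamma t ^ 2 + α + c₆ * vGamma c₅ t + c₇
              + β * Real.cos (σ * t + θ₀)))
      = Real.exp (1 + 2 * c₅) *
          (((a₁ - a₂) / 8 * t ^ 4
            + (a₃ / 2 + a₄ / 4 - a₁ / 4 - a₁ * c₅ / 2 - c₆ / 4) * t ^ 2
            + (c₆ / 2 + c₅ * c₆ - α - c₇)
            + (-β) * Real.cos (σ * t + θ₀)) * Real.exp (-t ^ 2 / 2)) := by
    intro t
    simp only [uGamma, vGamma]
    ring
  simp_rw [e, integral_const_mul, integral_comb]
  ring
end
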